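/- (Sufficiency part of Theorem 1.) Suppose the directed graph G is (F+1,F+1)-robust, let N = |R| ≥ 1 be the number of regular nodes, let c ≥ 0, and suppose the triggering parameter satisfies c0 ≤ γ^N·c/(4N). Then under Protocol 1, for all regular nodes i,j ∈ R, for every behavior of the malicious nodes, all initial values, and all admissible weight choices, lim sup_{k→∞} |x_i(k) − x_j(k)| ≤ c. -/

import Mathlib

open Finset

/- A directed graph on `n` nodes is given by its neighbor sets:
`j ∈ Nb i` means `(j, i)` is an edge, i.e. node `j` can send information to node `i`.
The node set is partitioned into the set `R` of regular nodes and its complement,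
the set of malicious nodes, whose cardinality is at most `F` (the `F`-total model).
Malicious nodes choose their states and broadcast values arbitrarily (they are
simply unconstrained below), but broadcast the same value to all neighbors. -/

/-- `MSRAbove Nbhd val xi F D`: `D` is an admissible set of removed "large" neighbors:
if fewer than `F` neighbors `j` have `val j > xi`, then exactly those are removed;
otherwise, `D` consists of `F` neighbors with values above `xi` which are largest among
those. -/
def MSRAbove {n : ℕ} (Nbhd : Finset (Fin n)) (val : Fin n → ℝ) (xi : ℝ) (F : ℕ)
    (D : Finset (Fin n)) : Prop :=
  ((Nbhd.filter fun j => xi < val j).card < F ∧ D = Nbhd.filter fun j => xi < val j) ∨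
  (F ≤ (Nbhd.filter fun j => xi < val j).card ∧
    D ⊆ (Nbhd.filter fun j => xi < val j) ∧ D.card = F ∧
    ∀ j ∈ D, ∀ l ∈ (Nbhd.filter fun j => xi < val j) \ D, val l ≤ val j)

/-- `MSRBelow Nbhd val xi F D`: `D` is an admissible set of removed "small" neighbors. -/
def MSRBelow {n : ℕ} (Nbhd : Finset (Fin n)) (val : Fin n → ℝ) (xi : ℝ) (F : ℕ)
    (D : Finset (Fin n)) : Prop :=
  ((Nbhd.filter fun j => val j < xi).card < F ∧ D = Nbhd.filter fun j => val j < xi) ∨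
  (F ≤ (Nbhd.filter fun j => val j < xi).card ∧
    D ⊆ (Nbhd.filter fun j => val j < xi) ∧ D.card = F ∧
    ∀ j ∈ D, ∀ l ∈ (Nbhd.filter fun j => val j < xi) \ D, val j ≤ val l)

/-- Protocol 1 (event-based MSR): every regular node `i ∈ R` filters its neighbors'
broadcast values relative to its own state `x k i`, updates
`x (k+1) i = x k i + Σ_{j ∈ M k i} a k i j * (x̂ k j - x k i)` with weights bounded
below by `γ` (including the self-weight `1 - Σ a k i j`), and broadcasts the new state
exactly when `|x̂ k i - x (k+1) i| > c0 + c1·exp(-α k)`. Malicious nodes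
(those outside `R`) are unconstrained. -/
def Protocol1 {n : ℕ} (F : ℕ) (Nb : Fin n → Finset (Fin n)) (R : Finset (Fin n))
    (γ c0 c1 α : ℝ) (x xhat : ℕ → Fin n → ℝ)
    (a : ℕ → Fin n → Fin n → ℝ) (M : ℕ → Fin n → Finset (Fin n)) : Prop :=
  ∀ k : ℕ, ∀ i ∈ R,
    (∃ Dmax Dmin : Finset (Fin n),
        MSRAbove (Nb i) (xhat k) (x k i) F Dmax ∧
        MSRBelow (Nb i) (xhat k) (x k i) F Dmin ∧
        M k i = Nb i \ (Dmax ∪ Dmin)) ∧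
    (∀ j ∈ M k i, γ ≤ a k i j) ∧
    γ ≤ 1 - ∑ j ∈ M k i, a k i j ∧
    x (k + 1) i = x k i + ∑ j ∈ M k i, a k i j * (xhat k j - x k i) ∧
    xhat (k + 1) i =
      if c0 + c1 * Real.exp (-α * (k : ℝ)) < |xhat k i - x (k + 1) i| then x (k + 1) i
      else xhat k i

/- A directed graph on `n` nodes is given by its neighbor sets:
`j ∈ Nb i` means `(j, i)` is an edge, i.e. node `j` can send information to node `i`. -/

/-- `reachSet Nb r S` is the set `X^r_S` of nodes of `S` having at least `r`
neighbors outside `S`. -/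
def reachSet {n : ℕ} (Nb : Fin n → Finset (Fin n)) (r : ℕ) (S : Finset (Fin n)) :
    Finset (Fin n) :=
  S.filter fun i => r ≤ ((Nb i) \ S).card

/-- `(r,s)`-robustness of the directed graph given by neighbor sets `Nb`. -/
def IsRobust {n : ℕ} (Nb : Fin n → Finset (Fin n)) (r s : ℕ) : Prop :=
  ∀ V1 V2 : Finset (Fin n), V1.Nonempty → V2.Nonempty → Disjoint V1 V2 →
    reachSet Nb r V1 = V1 ∨ reachSet Nb r V2 = V2 ∨
      s ≤ (reachSet Nb r V1).card + (reachSet Nb r V2).card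

lemma msr_below_iff_above_neg {n : ℕ} (Nbhd : Finset (Fin n)) (val : Fin n → ℝ) (xi : ℝ) (F : ℕ)
    (D : Finset (Fin n)) :
    MSRBelow Nbhd val xi F D ↔ MSRAbove Nbhd (fun j => -val j) (-xi) F D := by
  unfold MSRBelow MSRAbove
  simp only [neg_lt_neg_iff, neg_le_neg_iff]

lemma step_upper {ι : Type*} [DecidableEq ι] (s : Finset ι) (w v : ι → ℝ) (xi γ b B : ℝ)
    (hγ0 : 0 < γ)
    (hw : ∀ j ∈ s, γ ≤ w j) (hself : γ ≤ 1 - ∑ j ∈ s, w j)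
    (hv : ∀ j ∈ s, v j ≤ B) (hx : xi ≤ B) (hbB : b ≤ B)
    (hdes : xi ≤ b ∨ ∃ j0 ∈ s, v j0 ≤ b) :
    xi + ∑ j ∈ s, w j * (v j - xi) ≤ B - γ * (B - b) := by
  have hS0 : (0:ℝ) ≤ ∑ j ∈ s, w j :=
    Finset.sum_nonneg fun j hj => le_trans hγ0.le (hw j hj)
  rcases hdes with hxb | ⟨j0, hj0, hv0⟩
  · have hsum : ∑ j ∈ s, w j * (v j - xi) ≤ (∑ j ∈ s, w j) * (B - xi) := by
      rw [Finset.sum_mul]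
      exact Finset.sum_le_sum fun j hj =>
        mul_le_mul_of_nonneg_left (by linarith [hv j hj]) (le_trans hγ0.le (hw j hj))
    nlinarith [hsum]
  · have h2 : γ * (B - b) ≤ w j0 * (B - v j0) :=
      mul_le_mul (hw j0 hj0) (by linarith) (by linarith) (le_trans hγ0.le (hw j0 hj0))
    have h1 : w j0 * (v j0 - xi) ≤ w j0 * (B - xi) - γ * (B - b) := by nlinarith
    have h3 : ∑ j ∈ s.erase j0, w j * (v j - xi) ≤ ∑ j ∈ s.erase j0, w j * (B - xi) := by
      refine Finset.sum_le_sum fun j hj => ?_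
      have hjs := Finset.mem_of_mem_erase hj
      exact mul_le_mul_of_nonneg_left (by linarith [hv j hjs]) (le_trans hγ0.le (hw j hjs))
    have key : ∑ j ∈ s, w j * (v j - xi) ≤ (∑ j ∈ s, w j) * (B - xi) - γ * (B - b) := by
      rw [← Finset.add_sum_erase _ _ hj0, ← Finset.add_sum_erase _ (fun j => w j) hj0,
        add_mul]
      have := add_le_add h1 h3
      calc w j0 * (v j0 - xi) + ∑ j ∈ s.erase j0, w j * (v j - xi)
          ≤ (w j0 * (B - xi) - γ * (B - b)) + ∑ j ∈ s.erase j0, w j * (B - xi) := this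
        _ = w j0 * (B - xi) + (∑ j ∈ s.erase j0, w j) * (B - xi) - γ * (B - b) := by
            rw [Finset.sum_mul]; ring
    nlinarith [key]

lemma msr_filter_le {n F : ℕ} {Nbi : Finset (Fin n)} {R : Finset (Fin n)}
    (hF : (Finset.univ \ R).card ≤ F) {val : Fin n → ℝ} {xi B : ℝ}
    {Dmax Dmin Mi : Finset (Fin n)}
    (hA : MSRAbove Nbi val xi F Dmax) (hM : Mi = Nbi \ (Dmax ∪ Dmin))
    (hB : ∀ l ∈ R, val l ≤ B) (hxi : xi ≤ B) {j : Fin n} (hj : j ∈ Mi) :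
    val j ≤ B := by
  by_contra hgt
  push_neg at hgt
  rw [hM, Finset.mem_sdiff, Finset.mem_union] at hj
  obtain ⟨hjNb, hjD⟩ := hj
  push_neg at hjD
  have hjf : j ∈ Nbi.filter fun l => xi < val l :=
    Finset.mem_filter.2 ⟨hjNb, lt_of_le_of_lt hxi hgt⟩
  rcases hA with ⟨_, hD⟩ | ⟨_, hsub, hcard, hmaxl⟩
  · exact hjD.1 (hD ▸ hjf)
  · have hjdiff : j ∈ (Nbi.filter fun l => xi < val l) \ Dmax :=
      Finset.mem_sdiff.2 ⟨hjf, hjD.1⟩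
    have hDbig : ∀ d ∈ Dmax, B < val d := fun d hd =>
      lt_of_lt_of_le hgt (hmaxl d hd j hjdiff)
    have hsubA : insert j Dmax ⊆ Finset.univ \ R := by
      intro l hl
      rw [Finset.mem_sdiff]
      refine ⟨Finset.mem_univ l, fun hlR => ?_⟩
      rcases Finset.mem_insert.1 hl with rfl | hlD
      · exact absurd (hB l hlR) (not_le.2 hgt)
      · exact absurd (hB l hlR) (not_le.2 (hDbig l hlD))
    have hc : F + 1 ≤ (Finset.univ \ R).card := by
      have := Finset.card_le_card hsubA
      rwa [Finset.card_insert_of_notMem hjD.1, hcard] at this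
    omega

lemma one_step_top {n F : ℕ} {Nbi Dmax Dmin Mi V1 : Finset (Fin n)}
    {xh w : Fin n → ℝ} {xi xnext γ B b' : ℝ} (hγ0 : 0 < γ)
    (hA : MSRAbove Nbi xh xi F Dmax) (hBl : MSRBelow Nbi xh xi F Dmin)
    (hMi : Mi = Nbi \ (Dmax ∪ Dmin))
    (hw : ∀ j ∈ Mi, γ ≤ w j) (hself : γ ≤ 1 - ∑ j ∈ Mi, w j)
    (hup : xnext = xi + ∑ j ∈ Mi, w j * (xh j - xi))
    (hv : ∀ j ∈ Mi, xh j ≤ B) (hxi : xi ≤ B) (hb'B : b' ≤ B)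
    (hcard : F + 1 ≤ (Nbi \ V1).card)
    (hout : ∀ j ∈ Nbi \ V1, xh j ≤ b') :
    xnext ≤ B - γ * (B - b') := by
  rw [hup]
  refine step_upper Mi w xh xi γ b' B hγ0 hw hself hv hxi hb'B ?_
  by_cases hcase : ∃ j ∈ Nbi \ V1, xi ≤ xh j
  · obtain ⟨j, hj, hxj⟩ := hcase
    exact Or.inl (le_trans hxj (hout j hj))
  · push_neg at hcase
    have hsubf : Nbi \ V1 ⊆ Nbi.filter fun l => xh l < xi := fun j hj =>
      Finset.mem_filter.2 ⟨(Finset.mem_sdiff.1 hj).1, hcase j hj⟩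
    rcases hBl with ⟨hlt, hD⟩ | ⟨_, hsub, hcardD, _⟩
    · exfalso
      have := Finset.card_le_card hsubf
      omega
    · have hns : ¬ (Nbi \ V1 ⊆ Dmin) := by
        intro hsub2
        have := Finset.card_le_card hsub2
        omega
      obtain ⟨j0, hj0, hj0D⟩ := Finset.not_subset.1 hns
      have hj0f := hsubf hj0
      have hj0lt : xh j0 < xi := (Finset.mem_filter.1 hj0f).2
      have hj0max : j0 ∉ Dmax := by
        intro hmem
        rcases hA with ⟨_, hD⟩ | ⟨_, hsubA, _, _⟩
        · have := (Finset.mem_filter.1 (hD ▸ hmem)).2; linarith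
        · have := (Finset.mem_filter.1 (hsubA hmem)).2; linarith
      have hj0M : j0 ∈ Mi := by
        rw [hMi, Finset.mem_sdiff, Finset.mem_union]
        exact ⟨(Finset.mem_sdiff.1 hj0).1, fun h => h.elim hj0max hj0D⟩
      exact Or.inr ⟨j0, hj0M, hout j0 hj0⟩

lemma protocol1_neg {n F : ℕ} {Nb : Fin n → Finset (Fin n)} {R : Finset (Fin n)}
    {γ c0 c1 α : ℝ} {x xhat : ℕ → Fin n → ℝ} {a : ℕ → Fin n → Fin n → ℝ}
    {M : ℕ → Fin n → Finset (Fin n)}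
    (hP : Protocol1 F Nb R γ c0 c1 α x xhat a M) :
    Protocol1 F Nb R γ c0 c1 α (fun k i => -x k i) (fun k i => -xhat k i) a M := by
  intro k i hi
  obtain ⟨⟨Dmax, Dmin, hA, hB, hM⟩, hw, hself, hup, htrig⟩ := hP k i hi
  refine ⟨⟨Dmin, Dmax, ?_, ?_, by rw [hM, Finset.union_comm]⟩, hw, hself, ?_, ?_⟩
  · exact (msr_below_iff_above_neg _ _ _ _ _).1 hB
  · exact (msr_below_iff_above_neg (Nb i) (fun j => -xhat k j) (-x k i) F Dmax).2
      (by simpa using hA)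
  · have hc : ∀ j ∈ M k i, a k i j * (-xhat k j - -x k i) = -(a k i j * (xhat k j - x k i)) :=
      fun j _ => by ring
    show -x (k + 1) i = -x k i + ∑ j ∈ M k i, a k i j * (-xhat k j - -x k i)
    rw [Finset.sum_congr rfl hc, Finset.sum_neg_distrib, hup]
    ring
  · have habs : |-xhat k i - -x (k + 1) i| = |xhat k i - x (k + 1) i| := by
      rw [show -xhat k i - -x (k + 1) i = -(xhat k i - x (k + 1) i) by ring, abs_neg]
    simp only [habs]
    rw [htrig, apply_ite Neg.neg]

noncomputable def topVal {n : ℕ} (R : Finset (Fin n)) (hR : R.Nonempty)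
    (x xhat : ℕ → Fin n → ℝ) (k : ℕ) : ℝ :=
  R.sup' hR fun i => max (x k i) (xhat k i)

lemma x_le_topVal {n : ℕ} {R : Finset (Fin n)} (hR : R.Nonempty)
    (x xhat : ℕ → Fin n → ℝ) {k : ℕ} {i : Fin n} (hi : i ∈ R) :
    x k i ≤ topVal R hR x xhat k := by
  unfold topVal
  exact le_trans (le_max_left _ _) (Finset.le_sup' (fun i => max (x k i) (xhat k i)) hi)

lemma xhat_le_topVal {n : ℕ} {R : Finset (Fin n)} (hR : R.Nonempty)
    (x xhat : ℕ → Fin n → ℝ) {k : ℕ} {i : Fin n} (hi : i ∈ R) :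
    xhat k i ≤ topVal R hR x xhat k := by
  unfold topVal
  exact le_trans (le_max_right _ _) (Finset.le_sup' (fun i => max (x k i) (xhat k i)) hi)

lemma filter_le_topVal {n F : ℕ} {Nb : Fin n → Finset (Fin n)} {R : Finset (Fin n)}
    (hR : R.Nonempty) (hF : (Finset.univ \ R).card ≤ F)
    {γ c0 c1 α : ℝ} {x xhat : ℕ → Fin n → ℝ} {a : ℕ → Fin n → Fin n → ℝ}
    {M : ℕ → Fin n → Finset (Fin n)}
    (hP : Protocol1 F Nb R γ c0 c1 α x xhat a M)
    {k : ℕ} {i : Fin n} (hi : i ∈ R) {j : Fin n} (hj : j ∈ M k i) :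
    xhat k j ≤ topVal R hR x xhat k := by
  obtain ⟨⟨Dmax, Dmin, hA, hB, hM⟩, _, _, _, _⟩ := hP k i hi
  exact msr_filter_le hF hA hM (fun l hl => xhat_le_topVal hR x xhat hl)
    (x_le_topVal hR x xhat hi) hj

lemma next_le_topVal {n F : ℕ} {Nb : Fin n → Finset (Fin n)} {R : Finset (Fin n)}
    (hR : R.Nonempty) (hF : (Finset.univ \ R).card ≤ F)
    {γ c0 c1 α : ℝ} (hγ0 : 0 < γ) {x xhat : ℕ → Fin n → ℝ} {a : ℕ → Fin n → Fin n → ℝ}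
    {M : ℕ → Fin n → Finset (Fin n)}
    (hP : Protocol1 F Nb R γ c0 c1 α x xhat a M)
    {k : ℕ} {i : Fin n} (hi : i ∈ R) :
    x (k + 1) i ≤ topVal R hR x xhat k := by
  obtain ⟨⟨Dmax, Dmin, hA, hB, hM⟩, hw, hself, hup, _⟩ := hP k i hi
  rw [hup]
  have := step_upper (M k i) (a k i) (xhat k) (x k i) γ (topVal R hR x xhat k)
    (topVal R hR x xhat k) hγ0 hw hself
    (fun j hj => filter_le_topVal hR hF hP hi hj)
    (x_le_topVal hR x xhat hi) le_rfl (Or.inl (x_le_topVal hR x xhat hi))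
  simpa using this

lemma topVal_succ_le {n F : ℕ} {Nb : Fin n → Finset (Fin n)} {R : Finset (Fin n)}
    (hR : R.Nonempty) (hF : (Finset.univ \ R).card ≤ F)
    {γ c0 c1 α : ℝ} (hγ0 : 0 < γ) (hc0 : 0 ≤ c0) (hc1 : 0 ≤ c1)
    {x xhat : ℕ → Fin n → ℝ} {a : ℕ → Fin n → Fin n → ℝ}
    {M : ℕ → Fin n → Finset (Fin n)}
    (hP : Protocol1 F Nb R γ c0 c1 α x xhat a M) (k : ℕ) :
    topVal R hR x xhat (k + 1) ≤ topVal R hR x xhat k := by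
  refine Finset.sup'_le _ _ fun i hi => max_le ?_ ?_
  · exact next_le_topVal hR hF hγ0 hP hi
  · obtain ⟨_, _, _, _, htrig⟩ := hP k i hi
    rw [htrig]
    split
    · exact next_le_topVal hR hF hγ0 hP hi
    · exact xhat_le_topVal hR x xhat hi

lemma gap_bound {n F : ℕ} {Nb : Fin n → Finset (Fin n)} {R : Finset (Fin n)}
    {γ c0 c1 α : ℝ} (hc0 : 0 ≤ c0) (hc1 : 0 ≤ c1)
    {x xhat : ℕ → Fin n → ℝ} {a : ℕ → Fin n → Fin n → ℝ}
    {M : ℕ → Fin n → Finset (Fin n)}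
    (hP : Protocol1 F Nb R γ c0 c1 α x xhat a M)
    {k : ℕ} {i : Fin n} (hi : i ∈ R) :
    |xhat (k + 1) i - x (k + 1) i| ≤ c0 + c1 * Real.exp (-α * (k : ℝ)) := by
  obtain ⟨_, _, _, _, htrig⟩ := hP k i hi
  rw [htrig]
  split
  · simpa using add_nonneg hc0 (mul_nonneg hc1 (Real.exp_pos _).le)
  · next h => exact le_of_not_gt h

lemma filter_nonempty_of_inf {n : ℕ} {R : Finset (Fin n)} (hR : R.Nonempty)
    {x xhat : ℕ → Fin n → ℝ} {Ms eb η : ℝ} {k : ℕ}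
    (hMs : Ms ≤ topVal R hR x xhat k)
    (hgap : ∀ i ∈ R, |xhat k i - x k i| ≤ η)
    (hεη : η < eb) :
    (R.filter fun i0 => Ms - eb < x k i0).Nonempty := by
  rw [Finset.filter_nonempty_iff]
  by_contra h
  push_neg at h
  have hη0 : 0 ≤ η := le_trans (abs_nonneg _) (hgap hR.choose hR.choose_spec)
  have htop : topVal R hR x xhat k ≤ Ms - eb + η := by
    refine Finset.sup'_le _ _ fun i hi => max_le ?_ ?_
    · linarith [h i hi]
    · have h1 := hgap i hi
      have h2 : xhat k i - x k i ≤ η := le_trans (le_abs_self _) h1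
      linarith [h i hi]
  linarith

set_option maxHeartbeats 1000000

/-- Sufficiency part of Theorem 1: if the graph is `(F+1,F+1)`-robust, `N = |R| ≥ 1`,
`c ≥ 0`, and the triggering parameter satisfies `c0 ≤ γ^N·c/(4N)`, then under
Protocol 1 all regular nodes reach resilient consensus at error level `c`:
`limsup_{k→∞} |x_i(k) - x_j(k)| ≤ c` for all `i, j ∈ R`, regardless of the malicious
behaviors, initial values, and admissible weight choices. -/
theorem protocol1_sufficiency {n F N : ℕ} (Nb : Fin n → Finset (Fin n))
    (R : Finset (Fin n)) (hF : (Finset.univ \ R).card ≤ F)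
    (hRobust : IsRobust Nb (F + 1) (F + 1))
    (hN : R.card = N) (hN1 : 1 ≤ N)
    (γ c0 c1 α c : ℝ) (hγ0 : 0 < γ) (hγ : γ ≤ 1 / 2)
    (hc0 : 0 ≤ c0) (hc1 : 0 ≤ c1) (hα : 0 < α) (hc : 0 ≤ c)
    (hc0c : c0 ≤ γ ^ N * c / (4 * N))
    (x xhat : ℕ → Fin n → ℝ) (a : ℕ → Fin n → Fin n → ℝ)
    (M : ℕ → Fin n → Finset (Fin n))
    (hP : Protocol1 F Nb R γ c0 c1 α x xhat a M) :
    ∀ i ∈ R, ∀ j ∈ R,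
      Filter.limsup (fun k => |x k i - x k j|) Filter.atTop ≤ c := by
  have hR : R.Nonempty := Finset.card_pos.1 (by omega)
  set x' : ℕ → Fin n → ℝ := fun k i0 => -x k i0 with hx'def
  set xhat' : ℕ → Fin n → ℝ := fun k i0 => -xhat k i0 with hxhat'def
  have hP' : Protocol1 F Nb R γ c0 c1 α x' xhat' a M := protocol1_neg hP
  set Mb : ℕ → ℝ := topVal R hR x xhat with hMbdef
  set Mb' : ℕ → ℝ := topVal R hR x' xhat' with hMb'def
  have hMb_anti : Antitone Mb :=
    antitone_nat_of_succ_le (topVal_succ_le hR hF hγ0 hc0 hc1 hP)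
  have hMb'_anti : Antitone Mb' :=
    antitone_nat_of_succ_le (topVal_succ_le hR hF hγ0 hc0 hc1 hP')
  have hRc := hR
  obtain ⟨iw, hiw⟩ := hRc
  have hxle : ∀ k, ∀ i ∈ R, x k i ≤ Mb k := fun k i hi => x_le_topVal hR x xhat hi
  have hxle' : ∀ k, ∀ i ∈ R, -x k i ≤ Mb' k := fun k i hi => x_le_topVal hR x' xhat' hi
  have hlow : ∀ k, -Mb' 0 ≤ Mb k := by
    intro k
    have h2 := hxle' k iw hiw
    have h3 : Mb' k ≤ Mb' 0 := hMb'_anti (Nat.zero_le k)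
    linarith [hxle k iw hiw]
  have hlow' : ∀ k, -Mb 0 ≤ Mb' k := by
    intro k
    have h2 := hxle k iw hiw
    have h3 : Mb k ≤ Mb 0 := hMb_anti (Nat.zero_le k)
    linarith [hxle' k iw hiw]
  have hbdd : BddBelow (Set.range Mb) := ⟨-Mb' 0, by rintro _ ⟨k, rfl⟩; exact hlow k⟩
  have hbdd' : BddBelow (Set.range Mb') := ⟨-Mb 0, by rintro _ ⟨k, rfl⟩; exact hlow' k⟩
  set Ms : ℝ := ⨅ k, Mb k with hMsdef
  set Ms' : ℝ := ⨅ k, Mb' k with hMs'def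
  have hMb_tend : Filter.Tendsto Mb Filter.atTop (nhds Ms) :=
    tendsto_atTop_ciInf hMb_anti hbdd
  have hMb'_tend : Filter.Tendsto Mb' Filter.atTop (nhds Ms') :=
    tendsto_atTop_ciInf hMb'_anti hbdd'
  have hMs_le : ∀ k, Ms ≤ Mb k := fun k => ciInf_le hbdd k
  have hMs'_le : ∀ k, Ms' ≤ Mb' k := fun k => ciInf_le hbdd' k
  have key : Ms + Ms' ≤ c := by
    by_contra hgt
    push_neg at hgt
    have hγN : 0 < γ ^ N := pow_pos hγ0 N
    have hNR : (1:ℝ) ≤ (N:ℝ) := by exact_mod_cast hN1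
    set E0 : ℝ := (Ms + Ms') / 2 with hE0def
    have hE0pos : 0 < E0 := by
      simp only [hE0def]; linarith
    set δ : ℝ := γ ^ N * (Ms + Ms' - c) / (4 * (2 * (N:ℝ) + 1)) with hδdef
    have hδ0 : 0 < δ := by
      apply div_pos (mul_pos hγN (by linarith)) (by positivity)
    set η : ℝ := c0 + δ with hηdef
    have hη0 : 0 ≤ η := by simp only [hηdef]; linarith
    set ε : ℕ → ℝ :=
      fun l => γ ^ l * E0 - (c0 + 2*δ) * ∑ t ∈ Finset.range l, γ ^ t with hεdef
    have hεsucc : ∀ l, ε (l+1) = γ * ε l - (c0 + 2*δ) := by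
      intro l
      simp only [hεdef]
      rw [geom_sum_succ, pow_succ]
      ring
    have hγ1 : γ ≤ 1 := by linarith
    have hεle : ∀ l, ε l ≤ E0 := by
      intro l
      have h1 : γ ^ l ≤ 1 := pow_le_one₀ hγ0.le hγ1
      have h2 : (0:ℝ) ≤ ∑ t ∈ Finset.range l, γ ^ t :=
        Finset.sum_nonneg fun t _ => (pow_pos hγ0 t).le
      have h3 : (0:ℝ) ≤ c0 + 2*δ := by linarith
      simp only [hεdef]
      nlinarith
    have hεη : ∀ l ≤ N, η < ε l := by
      intro l hl
      have h1 : γ ^ N ≤ γ ^ l := pow_le_pow_of_le_one hγ0.le hγ1 hl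
      have h2 : ∑ t ∈ Finset.range l, γ ^ t ≤ (l:ℝ) := by
        calc ∑ t ∈ Finset.range l, γ ^ t ≤ ∑ _t ∈ Finset.range l, (1:ℝ) :=
              Finset.sum_le_sum fun t _ => pow_le_one₀ hγ0.le hγ1
          _ = l := by simp
      have h3 : (l:ℝ) ≤ (N:ℝ) := by exact_mod_cast hl
      have hc0' : c0 * (4 * (N:ℝ)) ≤ γ ^ N * c := by
        rwa [le_div_iff₀ (by positivity)] at hc0c
      have hεlb : γ ^ N * E0 - (c0 + 2*δ) * (N:ℝ) ≤ ε l := by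
        simp only [hεdef]
        have h4 : (c0 + 2*δ) * ∑ t ∈ Finset.range l, γ ^ t ≤ (c0+2*δ) * (N:ℝ) :=
          mul_le_mul_of_nonneg_left (le_trans h2 h3) (by linarith)
        nlinarith [mul_le_mul_of_nonneg_right h1 hE0pos.le]
      have hδN : (2*(N:ℝ)+1) * δ = γ ^ N * (Ms + Ms' - c)/4 := by
        simp only [hδdef]; field_simp
      have hND : 0 < γ ^ N * (Ms+Ms'-c) := mul_pos hγN (by linarith)
      have hE0eq : γ ^ N * E0 = γ ^ N * c / 2 + γ ^ N * (Ms + Ms' - c) / 2 := by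
        simp only [hE0def]; ring
      have hNc0 : ((N:ℝ) - 1) * c0 ≥ 0 := mul_nonneg (by linarith) hc0
      simp only [hηdef]
      nlinarith [hεlb, hδN, hND, hc0', hNc0, hδ0]
    -- pick k0
    have hexp : Filter.Tendsto (fun k : ℕ => c1 * Real.exp (-α * (k:ℝ)))
        Filter.atTop (nhds 0) := by
      have h1 : Filter.Tendsto (fun k : ℕ => α * (k:ℝ)) Filter.atTop Filter.atTop :=
        Filter.Tendsto.const_mul_atTop hα tendsto_natCast_atTop_atTop
      have h2 : Filter.Tendsto (fun k : ℕ => -α * (k:ℝ)) Filter.atTop Filter.atBot := by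
        have h2' := Filter.tendsto_neg_atTop_atBot.comp h1
        simpa [Function.comp_def, neg_mul] using h2'
      have h3 := Real.tendsto_exp_atBot.comp h2
      simpa using h3.const_mul c1
    have hev1 : ∀ᶠ k in Filter.atTop, Mb k < Ms + δ :=
      hMb_tend.eventually_lt_const (by linarith)
    have hev2 : ∀ᶠ k in Filter.atTop, Mb' k < Ms' + δ :=
      hMb'_tend.eventually_lt_const (by linarith)
    have hev3 : ∀ᶠ k : ℕ in Filter.atTop, c1 * Real.exp (-α * (k:ℝ)) ≤ δ :=
      hexp.eventually_le_const hδ0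
    obtain ⟨k0, hk0⟩ := Filter.eventually_atTop.1 ((hev1.and hev2).and hev3)
    set K := k0 + 1 with hKdef
    have hMbK : ∀ k, K ≤ k → Mb k ≤ Ms + δ := fun k hk => ((hk0 k (by omega)).1.1).le
    have hMbK' : ∀ k, K ≤ k → Mb' k ≤ Ms' + δ := fun k hk => ((hk0 k (by omega)).1.2).le
    have hgapK : ∀ k, K ≤ k → ∀ i ∈ R, |xhat k i - x k i| ≤ η := by
      intro k hk i hi
      obtain ⟨m, rfl⟩ : ∃ m, k = m + 1 := ⟨k - 1, by omega⟩
      have h1 := gap_bound hc0 hc1 hP hi (k := m)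
      have h2 := (hk0 m (by omega)).2
      simp only [hηdef]; linarith
    have hgapK' : ∀ k, K ≤ k → ∀ i ∈ R, |xhat' k i - x' k i| ≤ η := by
      intro k hk i hi
      have h := hgapK k hk i hi
      simp only [hx'def, hxhat'def]
      rwa [show -xhat k i - -x k i = -(xhat k i - x k i) by ring, abs_neg]
    set Zt : ℕ → Finset (Fin n) :=
      fun l => R.filter fun i1 => Ms - ε l < x (K + l) i1 with hZt
    set Zb : ℕ → Finset (Fin n) :=
      fun l => R.filter fun i1 => Ms' - ε l < x' (K + l) i1 with hZb
    set V1 : ℕ → Finset (Fin n) :=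
      fun l => Zt l ∪ (Finset.univ \ R).filter (fun j1 => Ms - ε l < xhat (K + l) j1)
      with hV1
    set V2 : ℕ → Finset (Fin n) :=
      fun l => Zb l ∪ (Finset.univ \ R).filter (fun j1 => Ms' - ε l < xhat' (K + l) j1)
      with hV2
    have hZtne : ∀ l ≤ N, (Zt l).Nonempty := fun l hl =>
      filter_nonempty_of_inf hR (hMs_le (K + l)) (hgapK (K+l) (by omega)) (hεη l hl)
    have hZbne : ∀ l ≤ N, (Zb l).Nonempty := fun l hl =>
      filter_nonempty_of_inf hR (hMs'_le (K + l)) (hgapK' (K+l) (by omega)) (hεη l hl)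
    have h2E : 2 * E0 = Ms + Ms' := by simp only [hE0def]; ring
    -- stay lemmas
    have hstay : ∀ l < N, ∀ i1 ∈ R, x (K + l) i1 ≤ Ms - ε l →
        x (K + l + 1) i1 ≤ Ms - ε (l+1) := by
      intro l hl i1 hi1 hx1
      obtain ⟨⟨Dmax, Dmin, hA, hB, hM⟩, hwts, hself, hup, _⟩ := hP (K + l) i1 hi1
      rw [hup]
      have hεpos : 0 < ε l := lt_of_le_of_lt hη0 (hεη l hl.le)
      have hb := step_upper (M (K+l) i1) (a (K+l) i1) (xhat (K+l)) (x (K+l) i1) γ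
        (Ms - ε l) (Ms + δ) hγ0 hwts hself
        (fun j1 hj1 => le_trans (filter_le_topVal hR hF hP hi1 hj1) (hMbK (K+l) (by omega)))
        (le_trans hx1 (by linarith)) (by linarith) (Or.inl hx1)
      have hexp2 : γ*((Ms+δ) - (Ms - ε l)) = γ*δ + γ*ε l := by ring
      linarith [hb, hεsucc l, mul_nonneg hγ0.le hδ0.le, hexp2]
    have hstay' : ∀ l < N, ∀ i1 ∈ R, x' (K + l) i1 ≤ Ms' - ε l →
        x' (K + l + 1) i1 ≤ Ms' - ε (l+1) := by
      intro l hl i1 hi1 hx1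
      obtain ⟨⟨Dmax, Dmin, hA, hB, hM⟩, hwts, hself, hup, _⟩ := hP' (K + l) i1 hi1
      rw [hup]
      have hεpos : 0 < ε l := lt_of_le_of_lt hη0 (hεη l hl.le)
      have hb := step_upper (M (K+l) i1) (a (K+l) i1) (xhat' (K+l)) (x' (K+l) i1) γ
        (Ms' - ε l) (Ms' + δ) hγ0 hwts hself
        (fun j1 hj1 => le_trans (filter_le_topVal hR hF hP' hi1 hj1) (hMbK' (K+l) (by omega)))
        (le_trans hx1 (by linarith)) (by linarith) (Or.inl hx1)
      have hexp2 : γ*((Ms'+δ) - (Ms' - ε l)) = γ*δ + γ*ε l := by ring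
      linarith [hb, hεsucc l, mul_nonneg hγ0.le hδ0.le, hexp2]
    have hsubt : ∀ l < N, ∀ i1, i1 ∈ Zt (l+1) → i1 ∈ Zt l := by
      intro l hl i1 h1
      simp only [hZt, Finset.mem_filter] at h1 ⊢
      refine ⟨h1.1, ?_⟩
      by_contra hno
      push_neg at hno
      have h2 := hstay l hl i1 h1.1 hno
      have h3 : K + (l+1) = K + l + 1 := rfl
      rw [h3] at h1
      linarith [h1.2]
    have hsubb : ∀ l < N, ∀ i1, i1 ∈ Zb (l+1) → i1 ∈ Zb l := by
      intro l hl i1 h1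
      simp only [hZb, Finset.mem_filter] at h1 ⊢
      refine ⟨h1.1, ?_⟩
      by_contra hno
      push_neg at hno
      have h2 := hstay' l hl i1 h1.1 hno
      have h3 : K + (l+1) = K + l + 1 := rfl
      rw [h3] at h1
      linarith [h1.2]
    have hZtV1 : ∀ l, ∀ i1, i1 ∈ Zt l → i1 ∈ V1 l := fun l i1 h =>
      Finset.mem_union_left _ h
    have hZbV2 : ∀ l, ∀ i1, i1 ∈ Zb l → i1 ∈ V2 l := fun l i1 h =>
      Finset.mem_union_left _ h
    have hV1R : ∀ l, ∀ i1, i1 ∈ V1 l → i1 ∈ R → i1 ∈ Zt l := by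
      intro l i1 h hiR
      rcases Finset.mem_union.1 h with h | h
      · exact h
      · exact absurd hiR (Finset.mem_sdiff.1 (Finset.mem_filter.1 h).1).2
    have hV2R : ∀ l, ∀ i1, i1 ∈ V2 l → i1 ∈ R → i1 ∈ Zb l := by
      intro l i1 h hiR
      rcases Finset.mem_union.1 h with h | h
      · exact h
      · exact absurd hiR (Finset.mem_sdiff.1 (Finset.mem_filter.1 h).1).2
    have hwit : ∀ l, l < N → (∃ i1 ∈ Zt l, x (K + l + 1) i1 ≤ Ms - ε (l+1)) ∨
        (∃ i1 ∈ Zb l, x' (K + l + 1) i1 ≤ Ms' - ε (l+1)) := by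
      intro l hl
      have hne1 : (V1 l).Nonempty := by
        obtain ⟨i1, h⟩ := hZtne l hl.le
        exact ⟨i1, hZtV1 l i1 h⟩
      have hne2 : (V2 l).Nonempty := by
        obtain ⟨i1, h⟩ := hZbne l hl.le
        exact ⟨i1, hZbV2 l i1 h⟩
      have hdisj : Disjoint (V1 l) (V2 l) := by
        rw [Finset.disjoint_left]
        intro t ht1 ht2
        have hεE : ε l ≤ E0 := hεle l
        simp only [hV1, hV2, hZt, hZb, hx'def, hxhat'def, Finset.mem_union,
          Finset.mem_filter, Finset.mem_sdiff, Finset.mem_univ, true_and] at ht1 ht2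
        rcases ht1 with ⟨htR, hv⟩ | ⟨htR, hv⟩ <;> rcases ht2 with ⟨htR2, hv2⟩ | ⟨htR2, hv2⟩
        · linarith
        · exact htR2 htR
        · exact htR htR2
        · linarith
      have hreach := hRobust (V1 l) (V2 l) hne1 hne2 hdisj
      have hsel : (∃ i1 ∈ Zt l, F + 1 ≤ ((Nb i1) \ V1 l).card) ∨
          (∃ i1 ∈ Zb l, F + 1 ≤ ((Nb i1) \ V2 l).card) := by
        rcases hreach with hr | hr | hr
        · obtain ⟨i1, hi1⟩ := hZtne l hl.le
          have h2 : i1 ∈ reachSet Nb (F+1) (V1 l) := by rw [hr]; exact hZtV1 l i1 hi1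
          exact Or.inl ⟨i1, hi1, (Finset.mem_filter.1 h2).2⟩
        · obtain ⟨i1, hi1⟩ := hZbne l hl.le
          have h2 : i1 ∈ reachSet Nb (F+1) (V2 l) := by rw [hr]; exact hZbV2 l i1 hi1
          exact Or.inr ⟨i1, hi1, (Finset.mem_filter.1 h2).2⟩
        · have hX1 : reachSet Nb (F+1) (V1 l) ⊆ V1 l := Finset.filter_subset _ _
          have hX2 : reachSet Nb (F+1) (V2 l) ⊆ V2 l := Finset.filter_subset _ _
          have hdX : Disjoint (reachSet Nb (F+1) (V1 l)) (reachSet Nb (F+1) (V2 l)) :=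
            hdisj.mono hX1 hX2
          have hcu : F + 1 ≤ (reachSet Nb (F+1) (V1 l) ∪ reachSet Nb (F+1) (V2 l)).card := by
            rw [Finset.card_union_of_disjoint hdX]; exact hr
          have hns : ¬ (reachSet Nb (F+1) (V1 l) ∪ reachSet Nb (F+1) (V2 l) ⊆
              Finset.univ \ R) := by
            intro hs
            have := Finset.card_le_card hs
            omega
          obtain ⟨i1, hi1U, hi1n⟩ := Finset.not_subset.1 hns
          have hi1R : i1 ∈ R := by
            by_contra h
            exact hi1n (Finset.mem_sdiff.2 ⟨Finset.mem_univ _, h⟩)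
          rcases Finset.mem_union.1 hi1U with h | h
          · exact Or.inl ⟨i1, hV1R l i1 (hX1 h) hi1R, (Finset.mem_filter.1 h).2⟩
          · exact Or.inr ⟨i1, hV2R l i1 (hX2 h) hi1R, (Finset.mem_filter.1 h).2⟩
      rcases hsel with ⟨i1, hiZ, hcard⟩ | ⟨i1, hiZ, hcard⟩
      · left
        have hiZ' := hiZ
        simp only [hZt, Finset.mem_filter] at hiZ'
        refine ⟨i1, hiZ, ?_⟩
        obtain ⟨⟨Dmax, Dmin, hA, hB, hM⟩, hwts, hself, hup, _⟩ := hP (K + l) i1 hiZ'.1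
        have hout : ∀ j1 ∈ Nb i1 \ V1 l, xhat (K+l) j1 ≤ Ms - ε l + η := by
          intro j1 hj1
          obtain ⟨hjNb, hjV⟩ := Finset.mem_sdiff.1 hj1
          by_cases hjR : j1 ∈ R
          · have hx1 : x (K+l) j1 ≤ Ms - ε l := by
              by_contra hcon
              push_neg at hcon
              exact hjV (hZtV1 l j1 (by simp only [hZt, Finset.mem_filter]; exact ⟨hjR, hcon⟩))
            have hg := hgapK (K+l) (by omega) j1 hjR
            have h2 : xhat (K+l) j1 - x (K+l) j1 ≤ η := le_trans (le_abs_self _) hg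
            linarith
          · have hcon : ¬ (Ms - ε l < xhat (K+l) j1) := by
              intro hgt2
              exact hjV (Finset.mem_union_right _
                (Finset.mem_filter.2 ⟨Finset.mem_sdiff.2 ⟨Finset.mem_univ _, hjR⟩, hgt2⟩))
            push_neg at hcon
            linarith
        have hb := one_step_top (B := Ms + δ) (b' := Ms - ε l + η) (V1 := V1 l)
          hγ0 hA hB hM hwts hself hup
          (fun j1 hj1 => le_trans (filter_le_topVal hR hF hP hiZ'.1 hj1)
            (hMbK (K+l) (by omega)))
          (le_trans (x_le_topVal hR x xhat hiZ'.1) (hMbK (K+l) (by omega)))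
          (by have := hεη l hl.le; linarith)
          hcard hout
        have hexp2 : γ * ((Ms+δ) - (Ms - ε l + η)) = γ*ε l - γ*c0 := by
          simp only [hηdef]; ring
        have hγc0 : γ * c0 ≤ c0 := mul_le_of_le_one_left hc0 hγ1
        linarith [hb, hεsucc l, hexp2, hγc0, hδ0.le]
      · right
        have hiZ' := hiZ
        simp only [hZb, Finset.mem_filter] at hiZ'
        refine ⟨i1, hiZ, ?_⟩
        obtain ⟨⟨Dmax, Dmin, hA, hB, hM⟩, hwts, hself, hup, _⟩ := hP' (K + l) i1 hiZ'.1
        have hout : ∀ j1 ∈ Nb i1 \ V2 l, xhat' (K+l) j1 ≤ Ms' - ε l + η := by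
          intro j1 hj1
          obtain ⟨hjNb, hjV⟩ := Finset.mem_sdiff.1 hj1
          by_cases hjR : j1 ∈ R
          · have hx1 : x' (K+l) j1 ≤ Ms' - ε l := by
              by_contra hcon
              push_neg at hcon
              exact hjV (hZbV2 l j1 (by simp only [hZb, Finset.mem_filter]; exact ⟨hjR, hcon⟩))
            have hg := hgapK' (K+l) (by omega) j1 hjR
            have h2 : xhat' (K+l) j1 - x' (K+l) j1 ≤ η := le_trans (le_abs_self _) hg
            linarith
          · have hcon : ¬ (Ms' - ε l < xhat' (K+l) j1) := by
              intro hgt2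
              exact hjV (Finset.mem_union_right _
                (Finset.mem_filter.2 ⟨Finset.mem_sdiff.2 ⟨Finset.mem_univ _, hjR⟩, hgt2⟩))
            push_neg at hcon
            linarith
        have hb := one_step_top (B := Ms' + δ) (b' := Ms' - ε l + η) (V1 := V2 l)
          hγ0 hA hB hM hwts hself hup
          (fun j1 hj1 => le_trans (filter_le_topVal hR hF hP' hiZ'.1 hj1)
            (hMbK' (K+l) (by omega)))
          (le_trans (x_le_topVal hR x' xhat' hiZ'.1) (hMbK' (K+l) (by omega)))
          (by have := hεη l hl.le; linarith)
          hcard hout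
        have hexp2 : γ * ((Ms'+δ) - (Ms' - ε l + η)) = γ*ε l - γ*c0 := by
          simp only [hηdef]; ring
        have hγc0 : γ * c0 ≤ c0 := mul_le_of_le_one_left hc0 hγ1
        linarith [hb, hεsucc l, hexp2, hγc0, hδ0.le]
    have hdecr : ∀ l, l < N →
        (Zt (l+1)).card + (Zb (l+1)).card + 1 ≤ (Zt l).card + (Zb l).card := by
      intro l hl
      rcases hwit l hl with ⟨i1, hiZ, hbd⟩ | ⟨i1, hiZ, hbd⟩
      · have hnot : i1 ∉ Zt (l+1) := by
          simp only [hZt, Finset.mem_filter]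
          rintro ⟨-, h⟩
          have h3 : K + (l+1) = K + l + 1 := rfl
          rw [h3] at h
          linarith
        have hsub2 : Zt (l+1) ⊆ (Zt l).erase i1 := fun t ht =>
          Finset.mem_erase.2 ⟨fun he => hnot (he ▸ ht), hsubt l hl t ht⟩
        have h1 := Finset.card_le_card hsub2
        rw [Finset.card_erase_of_mem hiZ] at h1
        have h2 := Finset.card_le_card (fun t ht => hsubb l hl t ht)
        have h3 : 1 ≤ (Zt l).card := Finset.card_pos.2 ⟨i1, hiZ⟩
        omega
      · have hnot : i1 ∉ Zb (l+1) := by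
          simp only [hZb, Finset.mem_filter]
          rintro ⟨-, h⟩
          have h3 : K + (l+1) = K + l + 1 := rfl
          rw [h3] at h
          linarith
        have hsub2 : Zb (l+1) ⊆ (Zb l).erase i1 := fun t ht =>
          Finset.mem_erase.2 ⟨fun he => hnot (he ▸ ht), hsubb l hl t ht⟩
        have h1 := Finset.card_le_card hsub2
        rw [Finset.card_erase_of_mem hiZ] at h1
        have h2 := Finset.card_le_card (fun t ht => hsubt l hl t ht)
        have h3 : 1 ≤ (Zb l).card := Finset.card_pos.2 ⟨i1, hiZ⟩
        omega
    have hdisj0 : Disjoint (Zt 0) (Zb 0) := by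
      rw [Finset.disjoint_left]
      intro t h1 h2
      simp only [hZt, hZb, hx'def, Finset.mem_filter] at h1 h2
      have hεE := hεle 0
      linarith [h1.2, h2.2]
    have hsubR : Zt 0 ∪ Zb 0 ⊆ R := by
      intro t ht
      rcases Finset.mem_union.1 ht with h | h
      · simp only [hZt, Finset.mem_filter] at h
        exact h.1
      · simp only [hZb, Finset.mem_filter] at h
        exact h.1
    have hcard0 : (Zt 0).card + (Zb 0).card ≤ N := by
      rw [← Finset.card_union_of_disjoint hdisj0, ← hN]
      exact Finset.card_le_card hsubR
    have htot : ∀ l, l ≤ N →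
        (Zt l).card + (Zb l).card + l ≤ (Zt 0).card + (Zb 0).card := by
      intro l
      induction l with
      | zero => intro _; omega
      | succ m ih =>
        intro hm
        have h1 := hdecr m (by omega)
        have h2 := ih (by omega)
        omega
    have hfin := htot N le_rfl
    have hneN := Finset.card_pos.2 (hZtne N le_rfl)
    omega
  -- conclude from key
  intro i hi j hj
  have hub : ∀ k, |x k i - x k j| ≤ Mb k + Mb' k := by
    intro k
    have h1 := hxle k i hi
    have h2 := hxle' k j hj
    have h3 := hxle k j hj
    have h4 := hxle' k i hi
    rw [abs_sub_le_iff]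
    constructor <;> linarith
  have htend : Filter.Tendsto (fun k => Mb k + Mb' k) Filter.atTop (nhds (Ms + Ms')) :=
    hMb_tend.add hMb'_tend
  have hcob : Filter.IsCoboundedUnder (· ≤ ·) Filter.atTop (fun k => |x k i - x k j|) :=
    Filter.IsBoundedUnder.isCoboundedUnder_le
      (Filter.isBoundedUnder_of ⟨0, fun k => abs_nonneg _⟩)
  calc Filter.limsup (fun k => |x k i - x k j|) Filter.atTop
      ≤ Filter.limsup (fun k => Mb k + Mb' k) Filter.atTop :=
        Filter.limsup_le_limsup (Filter.Eventually.of_forall hub) hcob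
          htend.isBoundedUnder_le
    _ = Ms + Ms' := htend.limsup_eq
    _ ≤ c := key
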